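/- Let (R,m) be a Noetherian local ring, n ≥ 2, f_1,...,f_n, f ∈ m, J = (f_1,...,f_n), I = (J, f), and J_i = (f_1,...,f_i) with J_0 = 0. Fix d ≥ 2. For i = 1,...,n+1 set T_{i,d} = ((J_{i-1}·I^{d-1} : f_i) ∩ I^{d-1}) / (J_{i-1}·I^{d-2}) where f_{n+1} = f. Then the following are equivalent for each i ≤ n+1: (i) the degree-d components of the first Koszul homology modules H_1(f_1 t,...,f_j t; R(I)) vanish for all j = 1,...,i; (ii) T_{j,d} = 0 for all j = 1,...,i. -/

import Mathlib

open Ideal Submodule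

variable {R : Type*} [CommRing R]

/-- The linear map `(a₁,…,aₘ) ↦ Σ aⱼ zⱼ`. -/
noncomputable def sumMul {m : ℕ} (z : Fin m → R) : (Fin m → R) →ₗ[R] R :=
  ∑ j, (LinearMap.proj j : (Fin m → R) →ₗ[R] R).smulRight (z j)

/-- The degree-`d` cycles of the Koszul complex of the degree-one elements
`z₁t,…,zₘt` on the Rees algebra of `I`: tuples with entries in `I^(d-1)`
that are syzygies of `z₁,…,zₘ`. -/
noncomputable def kosZ1 {m : ℕ} (I : Ideal R) (z : Fin m → R) (d : ℕ) :
    Submodule R (Fin m → R) :=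
  (⨅ j : Fin m, Submodule.comap (LinearMap.proj j) ((I ^ (d - 1) : Ideal R) : Submodule R R))
    ⊓ LinearMap.ker (sumMul z)

/-- The degree-`d` boundaries of the Koszul complex of `z₁t,…,zₘt` on the Rees algebra
of `I`: the span of the images `e_l ⊗ zⱼu - e_j ⊗ z_l u` of the Koszul differential
`∧²(Rᵐ) ⊗ I^(d-2) → Rᵐ ⊗ I^(d-1)`. -/
noncomputable def kosB1 {m : ℕ} (I : Ideal R) (z : Fin m → R) (d : ℕ) :
    Submodule R (Fin m → R) :=
  Submodule.span R {v | ∃ j l : Fin m, ∃ u ∈ I ^ (d - 2),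
    v = Pi.single l (z j * u) - Pi.single j (z l * u)}

/-- The degree-`d` component of the first Koszul homology `H₁(z₁t,…,zₘt; R(I))`. -/
noncomputable abbrev kosH1 {m : ℕ} (I : Ideal R) (z : Fin m → R) (d : ℕ) :=
  ↥(kosZ1 I z d) ⧸ (Submodule.comap (kosZ1 I z d).subtype (kosB1 I z d))

/-- The ideal `J_k = (f₁,…,f_k)` generated by the first `k` elements of the sequence. -/
noncomputable def Jpart {n : ℕ} (z : Fin (n + 1) → R) (k : ℕ) : Ideal R :=
  Ideal.span (z '' {l : Fin (n + 1) | (l : ℕ) < k})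

lemma sumMul_apply {m : ℕ} (z : Fin m → R) (x : Fin m → R) : sumMul z x = ∑ j, x j * z j := by
  simp [sumMul, smul_eq_mul]

lemma sumMul_single {m : ℕ} (z : Fin m → R) (k : Fin m) (c : R) :
    sumMul z (Pi.single k c) = c * z k := by
  rw [sumMul_apply]
  rw [Finset.sum_eq_single k]
  · simp
  · intro b _ hb; simp [Pi.single_apply, hb]
  · simp

lemma kosB1_le_ker {m : ℕ} (I : Ideal R) (z : Fin m → R) (d : ℕ) :
    kosB1 I z d ≤ LinearMap.ker (sumMul z) := by
  rw [kosB1, Submodule.span_le]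
  rintro v ⟨j, l, u, hu, rfl⟩
  simp only [SetLike.mem_coe, LinearMap.mem_ker, map_sub, sumMul_single]
  ring

lemma mem_span_range_mul {m : ℕ} (v : Fin m → R) (N : Ideal R) (x : R)
    (hx : x ∈ Ideal.span (Set.range v) * N) :
    ∃ c : Fin m → R, (∀ l, c l ∈ N) ∧ x = ∑ l, v l * c l := by
  refine Submodule.mul_induction_on hx ?_ ?_
  · intro a ha b hb
    obtain ⟨r, hr⟩ := (mem_span_range_iff_exists_fun R).mp ha
    refine ⟨fun l => r l * b, fun l => N.mul_mem_left _ hb, ?_⟩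
    rw [← hr, Finset.sum_mul]
    exact Finset.sum_congr rfl fun l _ => by rw [smul_eq_mul]; ring
  · rintro x y ⟨c, hc, rfl⟩ ⟨c', hc', rfl⟩
    exact ⟨c + c', fun l => add_mem (hc l) (hc' l), by
      rw [← Finset.sum_add_distrib]
      exact Finset.sum_congr rfl fun l _ => by simp [mul_add]⟩

lemma fwd {m d : ℕ} (I : Ideal R) (z : Fin (m + 1) → R)
    (h : kosZ1 I z d ≤ kosB1 I z d) :
    Submodule.colon (Ideal.span (Set.range (z ∘ Fin.castSucc)) * I ^ (d - 1))
        (Ideal.span {z (Fin.last m)}) ⊓ I ^ (d - 1) ≤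
      Ideal.span (Set.range (z ∘ Fin.castSucc)) * I ^ (d - 2) := by
  intro a ha
  obtain ⟨ha1, ha2⟩ := Submodule.mem_inf.mp ha
  rw [Ideal.mem_colon_span_singleton] at ha1
  obtain ⟨c, hc, hsum⟩ := mem_span_range_mul _ _ _ ha1
  set x : Fin (m + 1) → R := Fin.snoc (fun l => -c l) a with hx
  have hxZ : x ∈ kosZ1 I z d := by
    refine Submodule.mem_inf.mpr ⟨(Submodule.mem_iInf _).mpr fun k => ?_, ?_⟩
    · induction k using Fin.lastCases with
      | last => simpa [hx] using ha2
      | cast l =>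
        simp only [Submodule.mem_comap, LinearMap.proj_apply, hx, Fin.snoc_castSucc]
        exact neg_mem (hc l)
    · rw [LinearMap.mem_ker, sumMul_apply, Fin.sum_univ_castSucc]
      simp only [hx, Fin.snoc_castSucc, Fin.snoc_last]
      rw [hsum, ← Finset.sum_add_distrib, Finset.sum_eq_zero]
      intro l _; simp only [Function.comp_apply]; ring
  have hxB := h hxZ
  have key : kosB1 I z d ≤ Submodule.comap
      (LinearMap.proj (Fin.last m) : (Fin (m + 1) → R) →ₗ[R] R)
      ((Ideal.span (Set.range (z ∘ Fin.castSucc)) * I ^ (d - 2) : Ideal R) : Submodule R R) := by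
    rw [kosB1, Submodule.span_le]
    rintro v ⟨j, l, u, hu, rfl⟩
    simp only [SetLike.mem_coe, Submodule.mem_comap, LinearMap.proj_apply, Pi.sub_apply,
      Pi.single_apply]
    by_cases hl : Fin.last m = l
    · by_cases hj : Fin.last m = j
      · rw [if_pos hl, if_pos hj, ← hl, ← hj, sub_self]; exact zero_mem _
      · rw [if_pos hl, if_neg hj, sub_zero]
        refine Submodule.mul_mem_mul (Ideal.subset_span ?_) hu
        exact ⟨j.castPred (fun h => hj h.symm), by simp⟩
    · by_cases hj : Fin.last m = j
      · rw [if_neg hl, if_pos hj, zero_sub]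
        refine neg_mem (Submodule.mul_mem_mul (Ideal.subset_span ?_) hu)
        exact ⟨l.castPred (fun h => hl h.symm), by simp⟩
      · rw [if_neg hl, if_neg hj, sub_zero]; exact zero_mem _
  simpa [hx] using key hxB

/-- Extension by zero `(Fin m → R) →ₗ (Fin (m+1) → R)`. -/
noncomputable def ext0 {m : ℕ} : (Fin m → R) →ₗ[R] (Fin (m + 1) → R) :=
  ∑ l : Fin m, (LinearMap.single R (fun _ : Fin (m + 1) => R) l.castSucc).comp
    (LinearMap.proj l)

lemma ext0_single {m : ℕ} (j : Fin m) (c : R) :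
    (ext0 (Pi.single j c) : Fin (m + 1) → R) = Pi.single j.castSucc c := by
  rw [ext0]
  simp only [LinearMap.sum_apply, LinearMap.comp_apply, LinearMap.proj_apply,
    LinearMap.single_apply]
  rw [Finset.sum_eq_single j]
  · rw [Pi.single_eq_same]
  · intro b _ hb; rw [Pi.single_eq_of_ne hb, Pi.single_zero]
  · simp

lemma ext0_castSucc {m : ℕ} (v : Fin m → R) (k : Fin m) :
    ext0 v k.castSucc = v k := by
  rw [ext0]
  simp only [LinearMap.sum_apply, LinearMap.comp_apply, LinearMap.proj_apply,
    LinearMap.single_apply, Finset.sum_apply]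
  rw [Finset.sum_eq_single k]
  · rw [Pi.single_eq_same]
  · intro b _ hb
    exact Pi.single_eq_of_ne (fun h => hb (Fin.castSucc_inj.mp h).symm) _
  · simp

lemma ext0_last {m : ℕ} (v : Fin m → R) : ext0 v (Fin.last m) = 0 := by
  rw [ext0]
  simp only [LinearMap.sum_apply, LinearMap.comp_apply, LinearMap.proj_apply,
    LinearMap.single_apply, Finset.sum_apply]
  refine Finset.sum_eq_zero fun l _ => ?_
  exact Pi.single_eq_of_ne (Fin.castSucc_lt_last l).ne' _

lemma map_ext0_kosB1 {m : ℕ} (I : Ideal R) (z : Fin (m + 1) → R) (d : ℕ) :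
    Submodule.map ext0 (kosB1 I (z ∘ Fin.castSucc) d) ≤ kosB1 I z d := by
  rw [kosB1, Submodule.map_span, Submodule.span_le]
  rintro _ ⟨v, ⟨j, l, u, hu, rfl⟩, rfl⟩
  refine Submodule.subset_span ⟨j.castSucc, l.castSucc, u, hu, ?_⟩
  rw [map_sub, ext0_single, ext0_single]
  rfl

lemma bwd {m d : ℕ} (hd : 2 ≤ d) (I : Ideal R) (z : Fin (m + 1) → R) (hz : ∀ l, z l ∈ I)
    (prev : kosZ1 I (z ∘ Fin.castSucc) d ≤ kosB1 I (z ∘ Fin.castSucc) d)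
    (hQ : Submodule.colon (Ideal.span (Set.range (z ∘ Fin.castSucc)) * I ^ (d - 1))
        (Ideal.span {z (Fin.last m)}) ⊓ I ^ (d - 1) ≤
        Ideal.span (Set.range (z ∘ Fin.castSucc)) * I ^ (d - 2)) :
    kosZ1 I z d ≤ kosB1 I z d := by
  intro x hx
  obtain ⟨hx1, hx2⟩ := Submodule.mem_inf.mp hx
  rw [Submodule.mem_iInf] at hx1
  have hxco : ∀ k, x k ∈ I ^ (d - 1) := fun k => hx1 k
  have hker : ∑ k, x k * z k = 0 := by
    have := hx2; rwa [LinearMap.mem_ker, sumMul_apply] at this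
  -- the last coordinate lies in the colon ideal
  have hlast : x (Fin.last m) ∈ Ideal.span (Set.range (z ∘ Fin.castSucc)) * I ^ (d - 2) := by
    refine hQ (Submodule.mem_inf.mpr ⟨?_, hxco _⟩)
    rw [Ideal.mem_colon_span_singleton]
    have : x (Fin.last m) * z (Fin.last m)
        = -∑ l : Fin m, x l.castSucc * z l.castSucc := by
      rw [Fin.sum_univ_castSucc] at hker; linear_combination hker
    rw [this]
    refine neg_mem (Submodule.sum_mem _ fun l _ => ?_)
    rw [mul_comm (x l.castSucc)]
    exact Submodule.mul_mem_mul (Ideal.subset_span ⟨l, rfl⟩) (hxco _)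
  obtain ⟨u, hu, husum⟩ := mem_span_range_mul _ _ _ hlast
  -- the boundary we subtract
  set b : Fin (m + 1) → R := ∑ l : Fin m,
    (Pi.single (Fin.last m) (z l.castSucc * u l) - Pi.single l.castSucc (z (Fin.last m) * u l))
    with hb
  have hbB : b ∈ kosB1 I z d := by
    refine Submodule.sum_mem _ fun l _ => ?_
    exact Submodule.subset_span ⟨l.castSucc, Fin.last m, u l, hu l, rfl⟩
  have hblast : b (Fin.last m) = x (Fin.last m) := by
    rw [hb, Finset.sum_apply, husum]
    refine Finset.sum_congr rfl fun l _ => ?_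
    rw [Pi.sub_apply, Pi.single_eq_same, Pi.single_eq_of_ne (Fin.castSucc_lt_last l).ne',
      sub_zero, Function.comp_apply]
  have hbcast : ∀ k : Fin m, b k.castSucc = -(z (Fin.last m) * u k) := by
    intro k
    rw [hb, Finset.sum_apply]
    rw [Finset.sum_eq_single k]
    · rw [Pi.sub_apply, Pi.single_eq_of_ne (Fin.castSucc_lt_last k).ne, Pi.single_eq_same,
        zero_sub]
    · intro l _ hl
      rw [Pi.sub_apply, Pi.single_eq_of_ne (Fin.castSucc_lt_last k).ne,
        Pi.single_eq_of_ne (fun h => hl (Fin.castSucc_inj.mp h).symm), sub_self]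
    · simp
  -- the truncated cycle
  set y : Fin m → R := fun k => (x - b) k.castSucc with hy
  have hyZ : y ∈ kosZ1 I (z ∘ Fin.castSucc) d := by
    refine Submodule.mem_inf.mpr ⟨(Submodule.mem_iInf _).mpr fun k => ?_, ?_⟩
    · simp only [Submodule.mem_comap, LinearMap.proj_apply, hy, Pi.sub_apply, hbcast k,
        sub_neg_eq_add]
      refine add_mem (hxco _) ?_
      have : I ^ (d - 1) = I * I ^ (d - 2) := by
        have h2 : d - 1 = (d - 2) + 1 := by omega
        rw [h2, pow_succ, mul_comm]
      rw [this]
      exact Submodule.mul_mem_mul (hz _) (hu k)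
    · rw [LinearMap.mem_ker, sumMul_apply]
      have hsumb : ∑ k, b k * z k = 0 := by
        have := kosB1_le_ker I z d hbB
        rwa [LinearMap.mem_ker, sumMul_apply] at this
      have hfull : ∑ k, (x - b) k * z k = 0 := by
        have : ∀ k, (x - b) k * z k = x k * z k - b k * z k := fun k => by
          simp [sub_mul]
        simp only [this, Finset.sum_sub_distrib, hker, hsumb, sub_zero]
      rw [Fin.sum_univ_castSucc] at hfull
      have hl0 : (x - b) (Fin.last m) = 0 := by
        simp [Pi.sub_apply, hblast]
      rw [hl0, zero_mul, add_zero] at hfull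
      exact hfull
  have hyB := prev hyZ
  have hxy : x = ext0 y + b := by
    funext k
    induction k using Fin.lastCases with
    | last => simp [ext0_last, hblast]
    | cast l => simp [ext0_castSucc, hy]
  rw [hxy]
  exact add_mem (map_ext0_kosB1 I z d ⟨y, hyB, rfl⟩) hbB


lemma zle_zero {R : Type*} [CommRing R] (I : Ideal R) (z : Fin 0 → R) (d : ℕ) :
    kosZ1 I z d ≤ kosB1 I z d := by
  intro x _
  have : x = 0 := funext fun l => l.elim0
  rw [this]; exact zero_mem _

lemma subsingleton_kosH1_iff {m : ℕ} (I : Ideal R) (z : Fin m → R) (d : ℕ) :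
    Subsingleton (kosH1 I z d) ↔ kosZ1 I z d ≤ kosB1 I z d := by
  rw [Submodule.Quotient.subsingleton_iff, Submodule.comap_subtype_eq_top]

lemma Jpart_eq {n m : ℕ} (w : Fin (n + 1) → R) (h : m + 1 ≤ n + 1) :
    Jpart w m = Ideal.span (Set.range
      ((fun l : Fin (m + 1) => w (Fin.castLE h l)) ∘ Fin.castSucc)) := by
  unfold Jpart
  congr 1
  ext x
  constructor
  · rintro ⟨l, hl, rfl⟩
    exact ⟨⟨l.1, hl⟩, congrArg w (Fin.ext rfl)⟩
  · rintro ⟨k, rfl⟩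
    exact ⟨Fin.castLE h k.castSucc, by simpa using k.isLt, rfl⟩

theorem stmt6 {R : Type*} [CommRing R] [IsNoetherianRing R] [IsLocalRing R]
    {n : ℕ} (hn : 2 ≤ n) (g : Fin n → R) (f : R)
    (hg : ∀ i, g i ∈ IsLocalRing.maximalIdeal R) (hf : f ∈ IsLocalRing.maximalIdeal R)
    (J I : Ideal R) (hJ : J = Ideal.span (Set.range g)) (hI : I = J ⊔ Ideal.span {f})
    (d : ℕ) (hd : 2 ≤ d) (i : ℕ) (hi : i ≤ n + 1) :
    (∀ j : ℕ, ∀ (hj1 : 1 ≤ j) (hj2 : j ≤ i),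
        Subsingleton (kosH1 I
          (fun l : Fin j => (Fin.snoc g f : Fin (n + 1) → R) (Fin.castLE (le_trans hj2 hi) l)) d)) ↔
    (∀ j : ℕ, ∀ (hj1 : 1 ≤ j) (hj2 : j ≤ i),
        Submodule.colon (Jpart (Fin.snoc g f) (j - 1) * I ^ (d - 1))
            (Ideal.span {(Fin.snoc g f : Fin (n + 1) → R) (⟨j - 1, by omega⟩ : Fin (n + 1))}) ⊓ I ^ (d - 1) ≤
          Jpart (Fin.snoc g f) (j - 1) * I ^ (d - 2)) := by
  classical
  set w : Fin (n + 1) → R := Fin.snoc g f with hwdef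
  have hwI : ∀ l : Fin (n + 1), w l ∈ I := by
    intro l
    induction l using Fin.lastCases with
    | last =>
      rw [hwdef, Fin.snoc_last, hI]
      exact Ideal.mem_sup_right (Ideal.mem_span_singleton_self f)
    | cast k =>
      rw [hwdef, Fin.snoc_castSucc, hI]
      exact Ideal.mem_sup_left (hJ ▸ Ideal.subset_span ⟨k, rfl⟩)
  constructor
  · intro H j hj1 hj2
    obtain ⟨m, rfl⟩ : ∃ m, j = m + 1 := ⟨j - 1, by omega⟩
    have hm : m + 1 ≤ n + 1 := le_trans hj2 hi
    have hZle : kosZ1 I (fun l : Fin (m + 1) => w (Fin.castLE hm l)) d ≤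
        kosB1 I (fun l : Fin (m + 1) => w (Fin.castLE hm l)) d := by
      rw [← subsingleton_kosH1_iff]
      exact H (m + 1) hj1 hj2
    have hres := fwd I (fun l : Fin (m + 1) => w (Fin.castLE hm l)) hZle
    simp only [Nat.add_sub_cancel]
    rw [Jpart_eq w hm]
    exact hres
  · intro H j hj1 hj2
    have key : ∀ m : ℕ, ∀ hm : m ≤ n + 1, m ≤ i →
        kosZ1 I (fun l : Fin m => w (Fin.castLE hm l)) d ≤
          kosB1 I (fun l : Fin m => w (Fin.castLE hm l)) d := by
      intro m
      induction m with
      | zero => intro _ _; exact zle_zero I _ d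
      | succ m ih =>
        intro hm him
        refine bwd hd I _ (fun l => hwI _) ?_ ?_
        · exact ih (by omega) (by omega)
        · have hq := H (m + 1) (by omega) him
          simp only [Nat.add_sub_cancel] at hq
          rw [Jpart_eq w hm] at hq
          exact hq
    rw [subsingleton_kosH1_iff]
    exact key j (le_trans hj2 hi) hj2
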